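/- Let S be a finite set, Q an irreducible Q-matrix on S, γ : S → ℝ, λ₀ ∈ ℝ, and g : S → ℝ with g ≥ 0, g ≢ 0, satisfying for every i: ∑_{j≠i} q_ij g_j = (q_i − γ_i − λ₀) g_i, where q_i = ∑_{j≠i} q_ij. Then for every i with g_i > 0 and every i' with q_{i'i} > 0, we have g_{i'} > 0 and q_{i'} − γ_{i'} − λ₀ > 0; consequently, by irreducibility, g_i > 0 for all i ∈ S. -/

import Mathlib

/-- Positivity propagation for a nonnegative eigenfunction: one-step implication
and, by irreducibility, strict positivity everywhere. -/
theorem stmt_19 (S : Type*) [Fintype S] [DecidableEq S] (q : S → S → ℝ)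
    (hoff : ∀ i j, i ≠ j → 0 ≤ q i j) (hcons : ∀ i, ∑ j, q i j = 0)
    (hirr : ∀ i j : S, i ≠ j → Relation.TransGen (fun k l => 0 < q k l) i j)
    (γ : S → ℝ) (lam0 : ℝ)
    (qi : S → ℝ) (hqi : ∀ i, qi i = ∑ j, if j = i then 0 else q i j)
    (g : S → ℝ) (hgnn : ∀ i, 0 ≤ g i) (hgne : g ≠ 0)
    (heig : ∀ i, (∑ j, if j = i then 0 else q i j * g j) = (qi i - γ i - lam0) * g i) :
    (∀ i i', 0 < g i → 0 < q i' i → 0 < g i' ∧ 0 < qi i' - γ i' - lam0) ∧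
      ∀ i, 0 < g i := by
  have hdiag : ∀ i, q i i ≤ 0 := by
    intro i
    have h1 : qi i + q i i = 0 := by
      have hsplit : qi i = (∑ j, q i j) - ∑ j, (if j = i then q i j else 0) := by
        rw [hqi, ← Finset.sum_sub_distrib]
        apply Finset.sum_congr rfl
        intro j _
        by_cases h : j = i <;> simp [h]
      rw [hsplit, hcons i]
      simp [Finset.sum_ite_eq']
    have hqinn : 0 ≤ qi i := by
      rw [hqi i]
      apply Finset.sum_nonneg
      intro j _
      by_cases hji : j = i <;> simp [hji]
      exact hoff i j (Ne.symm hji)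
    linarith
  have step : ∀ i i', 0 < g i → 0 < q i' i → 0 < g i' ∧ 0 < qi i' - γ i' - lam0 := by
    intro i i' hgi hq
    have hne : i ≠ i' := by
      rintro rfl
      exact absurd hq (not_lt.mpr (hdiag i))
    have hsum : 0 < ∑ j, if j = i' then 0 else q i' j * g j := by
      have hle : q i' i * g i ≤ ∑ j, if j = i' then 0 else q i' j * g j := by
        have := Finset.single_le_sum (f := fun j => if j = i' then 0 else q i' j * g j)
          (fun j _ => ?_) (Finset.mem_univ i)
        · simpa [hne] using this
        · by_cases hji : j = i' <;> simp [hji]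
          exact mul_nonneg (hoff i' j (Ne.symm hji)) (hgnn j)
      exact lt_of_lt_of_le (mul_pos hq hgi) hle
    rw [heig i'] at hsum
    have hg' : 0 < g i' := by
      rcases lt_or_eq_of_le (hgnn i') with h | h
      · exact h
      · rw [← h, mul_zero] at hsum; exact absurd hsum (lt_irrefl 0)
    refine ⟨hg', ?_⟩
    rcases mul_pos_iff.mp hsum with ⟨hf, _⟩ | ⟨_, hneg⟩
    · exact hf
    · exact absurd hg' (not_lt.mpr hneg.le)
  refine ⟨step, ?_⟩
  obtain ⟨i0, hi0⟩ : ∃ i, g i ≠ 0 := Function.ne_iff.mp hgne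
  have hi0pos : 0 < g i0 := lt_of_le_of_ne (hgnn i0) (Ne.symm hi0)
  have key : ∀ a, Relation.TransGen (fun k l => 0 < q k l) a i0 → 0 < g a := by
    intro a ht
    induction ht using Relation.TransGen.head_induction_on with
    | single hr => exact (step _ _ hi0pos hr).1
    | head hr _ ih => exact (step _ _ ih hr).1
  intro i
  by_cases h : i = i0
  · rw [h]; exact hi0pos
  · exact key i (hirr i i0 h)
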